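/- Let P be a rendez-vous protocol with no leader. Then there exists B ∈ ℕ such that C_i^(n) →* C_f^(n) for all n ≥ B if and only if there exists N ∈ ℕ such that C_i^(N) →* C_f^(N) and C_i^(N+1) →* C_f^(N+1). -/

import Mathlib

/-- Actions labelling edges of a rendez-vous protocol: request (`recv`, written `?a`)
or answer (`send`, written `!a`). -/
inductive RVAct (A : Type) : Type
  | send : A → RVAct A
  | recv : A → RVAct A

/-- A rendez-vous protocol with no leader: a finite set of states `Q`, a finite
alphabet `A`, initial and final states, and a set of edges. -/
structure RVNProtocol (Q A : Type) : Type where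
  qi : Q
  qf : Q
  E : Set (Q × RVAct A × Q)

namespace RVNProtocol

variable {Q A : Type} [DecidableEq Q] (P : RVNProtocol Q A)

/-- One rendez-vous step between configurations (multisets of states). -/
def Step (C C' : Multiset Q) : Prop :=
  ∃ (a : A) (q1 q2 q1' q2' : Q),
    (q1, RVAct.recv a, q2) ∈ P.E ∧ (q1', RVAct.send a, q2') ∈ P.E ∧
    0 < C.count q1 ∧ 0 < C.count q1' ∧ 2 ≤ C.count q1 + C.count q1' ∧
    C' = C - {q1, q1'} + {q2, q2'}

/-- Reachability: reflexive-transitive closure of `Step`. -/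
def Reach : Multiset Q → Multiset Q → Prop := Relation.ReflTransGen P.Step

/-- The initial configuration with `n` processes: `n` copies of `q_i`. -/
def Ci (n : ℕ) : Multiset Q := Multiset.replicate n P.qi

/-- The final configuration with `n` processes: `n` copies of `q_f`. -/
def Cf (n : ℕ) : Multiset Q := Multiset.replicate n P.qf

/-- Every step either preserves cardinality (and then lifts to any larger context),
or increases it by one. -/
lemma step_dichotomy {C C' : Multiset Q} (h : P.Step C C') :
    (C'.card = C.card ∧ ∀ D, P.Step (C + D) (C' + D)) ∨ C'.card = C.card + 1 := by
  obtain ⟨a, q1, q2, q1', q2', he1, he2, h1, h1', h2, hC'⟩ := h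
  by_cases hle : ({q1, q1'} : Multiset Q) ≤ C
  · left
    obtain ⟨C0, rfl⟩ := Multiset.le_iff_exists_add.mp hle
    constructor
    · subst hC'
      simp [add_tsub_cancel_left]
    · intro D
      refine ⟨a, q1, q2, q1', q2', he1, he2, ?_, ?_, ?_, ?_⟩
      · simp only [Multiset.count_add] at h1 ⊢; omega
      · simp only [Multiset.count_add] at h1' ⊢; omega
      · simp only [Multiset.count_add] at h2 ⊢; omega
      · subst hC'
        rw [add_assoc ({q1, q1'} : Multiset Q) C0 D, add_tsub_cancel_left,
          add_tsub_cancel_left]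
        abel
  · right
    -- the failure of `{q1, q1'} ≤ C` forces `q1 = q1'` with a single copy in `C`.
    have hq : q1 = q1' := by
      by_contra hne
      exact hle (Multiset.le_iff_count.mpr (fun x => by
        rw [Multiset.insert_eq_cons, Multiset.count_cons, Multiset.count_singleton]
        by_cases hx1 : x = q1 <;> by_cases hx2 : x = q1' <;>
          simp_all <;> omega))
    subst hq
    have hcount : C.count q1 = 1 := by
      by_contra hne
      exact hle (Multiset.le_iff_count.mpr (fun x => by
        rw [Multiset.insert_eq_cons, Multiset.count_cons, Multiset.count_singleton]
        by_cases hx : x = q1 <;> simp_all <;> omega))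
    have hsub : C - {q1, q1} = C.erase q1 := by
      rw [Multiset.insert_eq_cons, Multiset.sub_cons, Multiset.sub_singleton,
        Multiset.erase_of_notMem]
      rw [← Multiset.count_pos]
      simp [Multiset.count_erase_self, hcount]
    have hmem : q1 ∈ C := by rw [← Multiset.count_pos]; omega
    have hcard : C.card ≥ 1 := Multiset.card_pos_iff_exists_mem.mpr ⟨q1, hmem⟩
    subst hC'
    rw [Multiset.card_add, hsub, Multiset.card_erase_of_mem hmem]
    simp [Multiset.insert_eq_cons]
    omega

lemma reach_card_le {C C' : Multiset Q} (h : P.Reach C C') : C.card ≤ C'.card := by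
  induction h with
  | refl => exact le_rfl
  | tail _ hs ih =>
    rcases P.step_dichotomy hs with ⟨h1, _⟩ | h1 <;> omega

lemma reach_add {C C' : Multiset Q} (h : P.Reach C C') :
    C'.card = C.card → ∀ D, P.Reach (C + D) (C' + D) := by
  induction h using Relation.ReflTransGen.head_induction_on with
  | refl => exact fun _ _ => Relation.ReflTransGen.refl
  | head hstep hreach ih =>
    intro hcard D
    have h1 := P.reach_card_le hreach
    rcases P.step_dichotomy hstep with ⟨hcb, hlift⟩ | hcb
    · exact Relation.ReflTransGen.head (hlift D) (ih (by omega) D)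
    · exfalso; omega

lemma reach_ci_cf_add (a b : ℕ) (ha : P.Reach (P.Ci a) (P.Cf a))
    (hb : P.Reach (P.Ci b) (P.Cf b)) : P.Reach (P.Ci (a + b)) (P.Cf (a + b)) := by
  have h1 : P.Reach (P.Ci a + P.Ci b) (P.Cf a + P.Ci b) :=
    P.reach_add ha (by simp [Ci, Cf]) _
  have h2 : P.Reach (P.Ci b + P.Cf a) (P.Cf b + P.Cf a) :=
    P.reach_add hb (by simp [Ci, Cf]) _
  rw [add_comm (P.Ci b), add_comm (P.Cf b)] at h2
  have := h1.trans h2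
  simpa [Ci, Cf, Multiset.replicate_add, Reach] using this

lemma reach_ci_cf_mul (k n : ℕ) (h : P.Reach (P.Ci n) (P.Cf n)) :
    P.Reach (P.Ci (k * n)) (P.Cf (k * n)) := by
  induction k with
  | zero => simp [Ci, Cf]; exact Relation.ReflTransGen.refl
  | succ k ih =>
    have := P.reach_ci_cf_add (k * n) n ih h
    simpa [Nat.succ_mul] using this

end RVNProtocol

/-- A rendez-vous protocol with no leader admits a cut-off iff there is
an `N` such that both `C_i^{(N)} →* C_f^{(N)}` and `C_i^{(N+1)} →* C_f^{(N+1)}`. -/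
theorem noleader_cutoff_iff_two_consecutive {Q A : Type} [Fintype Q] [Fintype A]
    [DecidableEq Q] (P : RVNProtocol Q A) :
    (∃ B : ℕ, ∀ n ≥ B, P.Reach (P.Ci n) (P.Cf n)) ↔
    (∃ N : ℕ, P.Reach (P.Ci N) (P.Cf N) ∧ P.Reach (P.Ci (N + 1)) (P.Cf (N + 1))) := by
  constructor
  · rintro ⟨B, hB⟩
    exact ⟨B, hB B le_rfl, hB (B + 1) (by omega)⟩
  · rintro ⟨N, hN, hN1⟩
    refine ⟨N * N, fun n hn => ?_⟩
    rcases Nat.eq_zero_or_pos N with rfl | hNpos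
    · simpa using P.reach_ci_cf_mul n 1 hN1
    · set q := n / N with hqdef
      set r := n % N with hrdef
      have hr : r < N := Nat.mod_lt _ hNpos
      have hq : N ≤ q := (Nat.le_div_iff_mul_le hNpos).mpr hn
      have hrq : r ≤ q := le_of_lt (lt_of_lt_of_le hr hq)
      have hrep : n = (q - r) * N + r * (N + 1) := by
        have hd := Nat.div_add_mod n N
        have h3 : r * N ≤ q * N := Nat.mul_le_mul_right _ hrq
        calc n = N * q + r := hd.symm
        _ = q * N - r * N + r * N + r := by
            rw [Nat.sub_add_cancel h3, Nat.mul_comm]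
        _ = (q - r) * N + r * (N + 1) := by
            rw [Nat.sub_mul, Nat.mul_add, Nat.mul_one, add_assoc]
      rw [hrep]
      exact P.reach_ci_cf_add _ _ (P.reach_ci_cf_mul (q - r) N hN)
        (P.reach_ci_cf_mul r (N + 1) hN1)
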